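/- The function η(t1, q) = Σ_n κ_n·X³·c_n³·(q_n³/t1² + 3q_n) + ϑ·(t1 + t2 + t3 + t4), defined for t1 > 0 and q_n ∈ [0, t1], is jointly convex in (t1, t2, t3, t4, q₁, …, q_N). -/

import Mathlib

open Set

lemma radon_aux (x1 x2 y1 y2 : ℝ) (hx1 : 0 ≤ x1) (hx2 : 0 ≤ x2) (hy1 : 0 < y1) (hy2 : 0 < y2) :
    (x1 + x2) ^ 3 / (y1 + y2) ^ 2 ≤ x1 ^ 3 / y1 ^ 2 + x2 ^ 3 / y2 ^ 2 := by
  rw [div_add_div _ _ (by positivity) (by positivity),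
    div_le_div_iff₀ (by positivity) (by positivity)]
  nlinarith [sq_nonneg (x1*y2 - x2*y1), mul_pos hy1 hy2, sq_nonneg (x1*y2 + x2*y1),
    mul_nonneg hx1 hx2, mul_nonneg (mul_nonneg hx1 hx2) (mul_pos hy1 hy2).le,
    mul_nonneg hx1 (sq_nonneg (x1*y2 - x2*y1)), mul_nonneg hx2 (sq_nonneg (x1*y2 - x2*y1)),
    mul_nonneg (mul_nonneg hx1 hy1.le) (sq_nonneg (x1*y2 - x2*y1)),
    mul_nonneg (mul_nonneg hx2 hy2.le) (sq_nonneg (x1*y2 - x2*y1)),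
    mul_nonneg (mul_nonneg hx1 hy2.le) (sq_nonneg (x1*y2 - x2*y1)),
    mul_nonneg (mul_nonneg hx2 hy1.le) (sq_nonneg (x1*y2 - x2*y1))]

lemma pos_comb (a b x y : ℝ) (ha : 0 ≤ a) (hb : 0 ≤ b) (hab : a + b = 1)
    (hx : 0 < x) (hy : 0 < y) : 0 < a * x + b * y := by
  rcases ha.eq_or_lt with rfl | ha'
  · have : b = 1 := by linarith
    simp [this, hy]
  · have h1 : 0 ≤ b * y := mul_nonneg hb hy.le
    nlinarith [mul_pos ha' hx]

lemma persp_comb (a b q1 q2 t1 t2 : ℝ) (ha : 0 < a) (hb : 0 < b)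
    (hq1 : 0 ≤ q1) (hq2 : 0 ≤ q2) (ht1 : 0 < t1) (ht2 : 0 < t2) :
    (a * q1 + b * q2) ^ 3 / (a * t1 + b * t2) ^ 2
      ≤ a * (q1 ^ 3 / t1 ^ 2) + b * (q2 ^ 3 / t2 ^ 2) := by
  have h := radon_aux (a * q1) (b * q2) (a * t1) (b * t2)
    (mul_nonneg ha.le hq1) (mul_nonneg hb.le hq2) (mul_pos ha ht1) (mul_pos hb ht2)
  have e1 : (a * q1) ^ 3 / (a * t1) ^ 2 = a * (q1 ^ 3 / t1 ^ 2) := by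
    field_simp
  have e2 : (b * q2) ^ 3 / (b * t2) ^ 2 = b * (q2 ^ 3 / t2 ^ 2) := by
    field_simp
  rw [e1, e2] at h
  exact h

theorem stmt_16 {N : ℕ} (X ϑ : ℝ) (hX : 0 < X) (hϑ : 0 ≤ ϑ)
    (κ c : Fin N → ℝ) (hκ : ∀ n, 0 < κ n) (hc : ∀ n, 0 < c n) :
    ConvexOn ℝ
      {p : ℝ × ℝ × ℝ × ℝ × (Fin N → ℝ) |
        0 < p.1 ∧ ∀ n, p.2.2.2.2 n ∈ Set.Icc 0 p.1}
      (fun p : ℝ × ℝ × ℝ × ℝ × (Fin N → ℝ) =>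
        (∑ n, κ n * X ^ 3 * (c n) ^ 3 * ((p.2.2.2.2 n) ^ 3 / p.1 ^ 2 + 3 * p.2.2.2.2 n))
          + ϑ * (p.1 + p.2.1 + p.2.2.1 + p.2.2.2.1)) := by
  constructor
  · -- convexity of the set
    intro x hx y hy a b ha hb hab
    obtain ⟨hx1, hxq⟩ := hx
    obtain ⟨hy1, hyq⟩ := hy
    refine ⟨?_, fun n => ?_⟩
    · simpa using pos_comb a b x.1 y.1 ha hb hab hx1 hy1
    · obtain ⟨hxq0, hxq1⟩ := hxq n
      obtain ⟨hyq0, hyq1⟩ := hyq n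
      constructor
      · simpa using add_nonneg (mul_nonneg ha hxq0) (mul_nonneg hb hyq0)
      · simpa using add_le_add (mul_le_mul_of_nonneg_left hxq1 ha)
          (mul_le_mul_of_nonneg_left hyq1 hb)
  · intro x hx y hy a b ha hb hab
    obtain ⟨hx1, hxq⟩ := hx
    obtain ⟨hy1, hyq⟩ := hy
    rcases ha.eq_or_lt with rfl | ha'
    · have hb1 : b = 1 := by linarith
      subst hb1; simp
    rcases hb.eq_or_lt with rfl | hb'
    · have ha1 : a = 1 := by linarith
      subst ha1; simp
    simp only [Prod.fst_add, Prod.smul_fst, Prod.snd_add, Prod.smul_snd, Pi.add_apply,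
      Pi.smul_apply, smul_eq_mul]
    have hsum : ∀ (w : ℝ) (f : Fin N → ℝ),
        w * ∑ n, κ n * X ^ 3 * c n ^ 3 * f n = ∑ n, κ n * X ^ 3 * c n ^ 3 * (w * f n) := by
      intro w f
      rw [Finset.mul_sum]
      exact Finset.sum_congr rfl fun n _ => by ring
    have key : ∀ n : Fin N,
        κ n * X ^ 3 * c n ^ 3 *
            ((a * x.2.2.2.2 n + b * y.2.2.2.2 n) ^ 3 / (a * x.1 + b * y.1) ^ 2
              + 3 * (a * x.2.2.2.2 n + b * y.2.2.2.2 n))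
          ≤ κ n * X ^ 3 * c n ^ 3 * (a * (x.2.2.2.2 n ^ 3 / x.1 ^ 2 + 3 * x.2.2.2.2 n))
            + κ n * X ^ 3 * c n ^ 3 * (b * (y.2.2.2.2 n ^ 3 / y.1 ^ 2 + 3 * y.2.2.2.2 n)) := by
      intro n
      have hp := persp_comb a b (x.2.2.2.2 n) (y.2.2.2.2 n) x.1 y.1 ha' hb'
        (hxq n).1 (hyq n).1 hx1 hy1
      have hco : 0 ≤ κ n * X ^ 3 * c n ^ 3 := by
        have h1 := hκ n; have h2 := hc n; positivity
      nlinarith [mul_le_mul_of_nonneg_left hp hco]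
    have hS := Finset.sum_le_sum (fun n (_ : n ∈ Finset.univ) => key n)
    rw [Finset.sum_add_distrib] at hS
    have hlin : ϑ * ((a * x.1 + b * y.1) + (a * x.2.1 + b * y.2.1)
          + (a * x.2.2.1 + b * y.2.2.1) + (a * x.2.2.2.1 + b * y.2.2.2.1))
        = a * (ϑ * (x.1 + x.2.1 + x.2.2.1 + x.2.2.2.1))
          + b * (ϑ * (y.1 + y.2.1 + y.2.2.1 + y.2.2.2.1)) := by ring
    calc (∑ n, κ n * X ^ 3 * c n ^ 3 *
            ((a * x.2.2.2.2 n + b * y.2.2.2.2 n) ^ 3 / (a * x.1 + b * y.1) ^ 2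
              + 3 * (a * x.2.2.2.2 n + b * y.2.2.2.2 n)))
          + ϑ * ((a * x.1 + b * y.1) + (a * x.2.1 + b * y.2.1)
              + (a * x.2.2.1 + b * y.2.2.1) + (a * x.2.2.2.1 + b * y.2.2.2.1))
        ≤ ((∑ n, κ n * X ^ 3 * c n ^ 3 * (a * (x.2.2.2.2 n ^ 3 / x.1 ^ 2 + 3 * x.2.2.2.2 n)))
            + ∑ n, κ n * X ^ 3 * c n ^ 3 * (b * (y.2.2.2.2 n ^ 3 / y.1 ^ 2 + 3 * y.2.2.2.2 n)))
          + (a * (ϑ * (x.1 + x.2.1 + x.2.2.1 + x.2.2.2.1))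
            + b * (ϑ * (y.1 + y.2.1 + y.2.2.1 + y.2.2.2.1))) := by
          rw [← hlin]; exact add_le_add hS (le_refl _)
      _ = a * ((∑ n, κ n * X ^ 3 * c n ^ 3 * (x.2.2.2.2 n ^ 3 / x.1 ^ 2 + 3 * x.2.2.2.2 n))
            + ϑ * (x.1 + x.2.1 + x.2.2.1 + x.2.2.2.1))
          + b * ((∑ n, κ n * X ^ 3 * c n ^ 3 * (y.2.2.2.2 n ^ 3 / y.1 ^ 2 + 3 * y.2.2.2.2 n))
            + ϑ * (y.1 + y.2.1 + y.2.2.1 + y.2.2.2.1)) := by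
          have e1 := hsum a (fun n => x.2.2.2.2 n ^ 3 / x.1 ^ 2 + 3 * x.2.2.2.2 n)
          have e2 := hsum b (fun n => y.2.2.2.2 n ^ 3 / y.1 ^ 2 + 3 * y.2.2.2.2 n)
          linear_combination - e1 - e2
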